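/- arXiv:math/0204242 — 2 statements merged into one kernel-verified Lean document; each statement's English description precedes it below -/
import Mathlib

section
/- Let m ≥ 3, let A = ⟨σ_1, σ_2 | ⟨σ_1 σ_2⟩^m = ⟨σ_2 σ_1⟩^m⟩ be the Artin group of type I_2(m) and let W be the dihedral Coxeter group of type I_2(m) (of order 2m). If m ≢ 0 (mod 4), then every epimorphism A → W is ordinary. If m ≡ 0 (mod 4), then there are exactly two equivalence classes of extraordinary epimorphisms A → W, represented by ν_m^1 and ν_m^2, where ν_m^1(σ_1) = s_1, ν_m^1(σ_2) = s_2 s_1, ν_m^2(σ_1) = s_1 s_2, ν_m^2(σ_2) = s_2; in particular, when m ≡ 0 (mod 4) these two assignments define surjective group homomorphisms A → W that are extraordinary and inequivalent, and every extraordinary epimorphism A → W is equivalent to one of them. -/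
open Function

/-- The alternating word `⟨i j⟩^m = i j i j ⋯` with `m` factors, in the free group. -/
def altWord {α : Type*} (i j : α) : ℕ → FreeGroup α
  | 0 => 1
  | m + 1 => FreeGroup.of i * altWord j i m

/-- The braid relations of an Artin group of type `M` (an entry `0` encodes `∞`). -/
def artinRels {n : ℕ} (M : Matrix (Fin n) (Fin n) ℕ) : Set (FreeGroup (Fin n)) :=
  {r | ∃ i j : Fin n, i ≠ j ∧ M i j ≠ 0 ∧
      r = altWord i j (M i j) * (altWord j i (M i j))⁻¹}

/-- The relations of the Coxeter group of type `M`. -/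
def coxRels {n : ℕ} (M : Matrix (Fin n) (Fin n) ℕ) : Set (FreeGroup (Fin n)) :=
  artinRels M ∪ {r | ∃ i : Fin n, r = FreeGroup.of i ^ 2}

/-- The Artin group of type `M`. -/
abbrev ArtinGroup {n : ℕ} (M : Matrix (Fin n) (Fin n) ℕ) : Type :=
  PresentedGroup (artinRels M)

/-- The Coxeter group of type `M`, as the quotient of the Artin group by `σᵢ² = 1`. -/
abbrev CoxGroup {n : ℕ} (M : Matrix (Fin n) (Fin n) ℕ) : Type :=
  PresentedGroup (coxRels M)

/-- The standard generators `σᵢ` of the Artin group. -/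
def σA {n : ℕ} (M : Matrix (Fin n) (Fin n) ℕ) (i : Fin n) : ArtinGroup M :=
  PresentedGroup.of i

/-- The standard generators `sᵢ` of the Coxeter group. -/
def sC {n : ℕ} (M : Matrix (Fin n) (Fin n) ℕ) (i : Fin n) : CoxGroup M :=
  PresentedGroup.of i

lemma lift_of_eq_mk {n : ℕ} (M : Matrix (Fin n) (Fin n) ℕ) (r : FreeGroup (Fin n)) :
    FreeGroup.lift (fun i => (PresentedGroup.of i : CoxGroup M)) r
      = PresentedGroup.mk (coxRels M) r := by
  have h : (FreeGroup.lift (fun i => (PresentedGroup.of i : CoxGroup M)))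
      = PresentedGroup.mk (coxRels M) :=
    FreeGroup.ext_hom _ _ (fun x => by simp [PresentedGroup.of])
  rw [h]

/-- The standard epimorphism `μ : A → W`. -/
def stdEpi {n : ℕ} (M : Matrix (Fin n) (Fin n) ℕ) : ArtinGroup M →* CoxGroup M :=
  PresentedGroup.toGroup (f := fun i => (PresentedGroup.of i : CoxGroup M)) (by
    intro r hr
    rw [lift_of_eq_mk]
    exact (QuotientGroup.eq_one_iff r).mpr
      (Subgroup.subset_normalClosure (Set.mem_union_left _ hr)))

@[simp] lemma stdEpi_of {n : ℕ} (M : Matrix (Fin n) (Fin n) ℕ) (i : Fin n) :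
    stdEpi M (σA M i) = sC M i :=
  PresentedGroup.toGroup.of _

/-- `φ : A → W` is ordinary if it is `α ∘ μ` for some automorphism `α` of `W`. -/
def Ordinary {n : ℕ} {M : Matrix (Fin n) (Fin n) ℕ}
    (φ : ArtinGroup M →* CoxGroup M) : Prop :=
  ∃ α : CoxGroup M ≃* CoxGroup M, φ = α.toMonoidHom.comp (stdEpi M)

/-- The Coxeter matrix of type `I₂(m)`. -/
def I2 (m : ℕ) : Matrix (Fin 2) (Fin 2) ℕ := fun i j => if i = j then 1 else m

namespace Stmt3

open DihedralGroup Subgroup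

section AltG
variable {G : Type*} [Group G]

/-- alternating product in a group -/
def altG (a b : G) : ℕ → G
  | 0 => 1
  | m + 1 => a * altG b a m

lemma altG_add_two (a b : G) (k : ℕ) : altG a b (k + 2) = (a * b) * altG a b k := by
  simp [altG, mul_assoc]

lemma altG_two_mul (a b : G) (k : ℕ) : altG a b (2 * k) = (a * b) ^ k := by
  induction k with
  | zero => simp [altG]
  | succ k ih =>
      have : 2 * (k + 1) = 2 * k + 2 := by ring
      rw [this, altG_add_two, ih, pow_succ']

lemma altG_two_mul_add_one (a b : G) (k : ℕ) :
    altG a b (2 * k + 1) = (a * b) ^ k * a := by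
  induction k with
  | zero => simp [altG]
  | succ k ih =>
      have : 2 * (k + 1) + 1 = (2 * k + 1) + 2 := by ring
      rw [this, altG_add_two, ih, pow_succ']
      group

lemma lift_altWord {α : Type*} (f : α → G) (i j : α) (k : ℕ) :
    FreeGroup.lift f (altWord i j k) = altG (f i) (f j) k := by
  induction k generalizing i j with
  | zero => simp [altWord, altG]
  | succ k ih => simp [altWord, altG, ih]

end AltG

section Dih
variable {m : ℕ}

lemma r_pow (t : ZMod m) (k : ℕ) : (r t : DihedralGroup m) ^ k = r ((k : ZMod m) * t) := by
  induction k with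
  | zero => simp
  | succ k ih =>
      rw [pow_succ, ih, r_mul_r]
      push_cast
      ring_nf

/-- braid relation holds for two reflections (word length = modulus). -/
lemma braid_sr_sr (i j : ZMod m) :
    altG (sr i : DihedralGroup m) (sr j) m = altG (sr j) (sr i) m := by
  have hm0 : ((m : ℕ) : ZMod m) = 0 := ZMod.natCast_self m
  rcases Nat.even_or_odd m with ⟨k, hk⟩ | ⟨k, hk⟩
  · have hk' : m = 2 * k := by omega
    subst hk'
    rw [altG_two_mul, altG_two_mul, sr_mul_sr, sr_mul_sr, r_pow, r_pow]
    push_cast at hm0 ⊢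
    congr 1
    linear_combination (j - i) * hm0
  · subst hk
    rw [altG_two_mul_add_one, altG_two_mul_add_one, sr_mul_sr, sr_mul_sr, r_pow, r_pow,
      r_mul_sr, r_mul_sr]
    push_cast at hm0 ⊢
    congr 1
    linear_combination (i - j) * hm0

lemma altG_eq_one_of_four {G : Type*} [Group G] (a b : G) (q : ℕ) (h : (a * b) * (a * b) = 1) :
    altG a b (4 * q) = 1 := by
  have h4 : 4 * q = 2 * (2 * q) := by ring
  rw [h4, altG_two_mul, pow_mul]
  have : (a * b) ^ 2 = 1 := by rw [pow_two]; exact h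
  rw [this, one_pow]

/-- braid relation holds for (reflection, rotation) when `4 ∣ m`. -/
lemma braid_sr_r (h4 : m % 4 = 0) (i k : ZMod m) :
    altG (sr i : DihedralGroup m) (r k) m = altG (r k) (sr i) m ∧
    altG (r k : DihedralGroup m) (sr i) m = altG (sr i) (r k) m := by
  obtain ⟨q, hq⟩ : ∃ q, m = 4 * q := ⟨m / 4, by omega⟩
  have e1 : ∀ a b : DihedralGroup m, (a * b) * (a * b) = 1 → altG a b m = 1 := by
    intro a b h2
    rw [congrArg (altG a b) hq]
    exact altG_eq_one_of_four a b q h2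
  have esr : ∀ t : ZMod m, (sr t : DihedralGroup m) * sr t = 1 := sr_mul_self
  constructor
  · rw [e1 _ _ (by simp [esr]), e1 _ _ (by simp [esr])]
  · rw [e1 _ _ (by simp [esr]), e1 _ _ (by simp [esr])]

lemma sr_pow_two_mul (t : ZMod m) (p : ℕ) : (sr t : DihedralGroup m) ^ (2 * p) = 1 := by
  rw [pow_mul]
  have : (sr t : DihedralGroup m) ^ 2 = 1 := by rw [pow_two]; exact sr_mul_self t
  rw [this, one_pow]

lemma sr_pow_two_mul_add_one (t : ZMod m) (p : ℕ) :
    (sr t : DihedralGroup m) ^ (2 * p + 1) = sr t := by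
  rw [pow_succ, sr_pow_two_mul, one_mul]

/-- The braid relation fails for mixed pairs when `m % 4 ≠ 0` and the rotation is by a unit. -/
lemma braid_mixed_fails (hm : 3 ≤ m) (hm4 : m % 4 ≠ 0) {i k : ZMod m} (hk : IsUnit k) :
    altG (sr i : DihedralGroup m) (r k) m ≠ altG (r k) (sr i) m := by
  haveI : NeZero m := ⟨by omega⟩
  intro h
  rcases Nat.even_or_odd m with ⟨q, hq⟩ | ⟨q, hq⟩
  · -- m = 2 * q with q odd (else m % 4 = 0)
    have hq' : m = 2 * q := by omega
    have hqodd : ∃ p, q = 2 * p + 1 := by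
      rcases Nat.even_or_odd q with ⟨p, hp⟩ | ⟨p, hp⟩
      · exfalso; apply hm4; omega
      · exact ⟨p, by omega⟩
    obtain ⟨p, hp⟩ := hqodd
    rw [congrArg (altG _ _) hq', congrArg (altG _ _) hq'] at h
    rw [altG_two_mul, altG_two_mul, sr_mul_r, r_mul_sr, hp,
      sr_pow_two_mul_add_one, sr_pow_two_mul_add_one] at h
    have h2 : i + k = i - k := by injection h
    have h2k : k * 2 = 0 := by linear_combination h2
    have h20 : (2 : ZMod m) = 0 := by
      rwa [hk.mul_right_eq_zero] at h2k
    have : (m : ℕ) ∣ 2 := by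
      have := (ZMod.natCast_eq_zero_iff 2 m).mp (by push_cast; exact h20)
      exact this
    have := Nat.le_of_dvd (by norm_num) this
    omega
  · -- m odd
    have hq' : m = 2 * q + 1 := by omega
    rw [congrArg (altG _ _) hq', congrArg (altG _ _) hq'] at h
    rw [altG_two_mul_add_one, altG_two_mul_add_one, sr_mul_r, r_mul_sr] at h
    rcases Nat.even_or_odd q with ⟨p, hp⟩ | ⟨p, hp⟩
    · have hp' : q = 2 * p := by omega
      rw [hp', sr_pow_two_mul, sr_pow_two_mul, one_mul, one_mul] at h
      exact absurd h (by simp)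
    · have hp' : q = 2 * p + 1 := by omega
      rw [hp', sr_pow_two_mul_add_one, sr_pow_two_mul_add_one, sr_mul_sr, sr_mul_r] at h
      exact absurd h (by simp)

/-- The subgroup of rotations. -/
def rotSub (m : ℕ) : Subgroup (DihedralGroup m) where
  carrier := {x | ∃ t, x = r t}
  one_mem' := ⟨0, rfl⟩
  mul_mem' := by rintro _ _ ⟨a, rfl⟩ ⟨b, rfl⟩; exact ⟨a + b, rfl⟩
  inv_mem' := by rintro _ ⟨a, rfl⟩; exact ⟨-a, rfl⟩

/-- A dihedral subgroup built from multiples of a rotation amount `d`. -/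
def dihSub (i d : ZMod m) : Subgroup (DihedralGroup m) where
  carrier := {x | ∃ n : ℤ, x = r ((n : ZMod m) * d) ∨ x = sr (i + (n : ZMod m) * d)}
  one_mem' := ⟨0, Or.inl (by rw [one_def]; congr 1; push_cast; ring)⟩
  mul_mem' := by
    rintro x y ⟨n, rfl | rfl⟩ ⟨p, rfl | rfl⟩
    · exact ⟨n + p, Or.inl (by rw [r_mul_r]; congr 1; push_cast; ring)⟩
    · exact ⟨p - n, Or.inr (by rw [r_mul_sr]; congr 1; push_cast; ring)⟩
    · exact ⟨n + p, Or.inr (by rw [sr_mul_r]; congr 1; push_cast; ring)⟩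
    · exact ⟨p - n, Or.inl (by rw [sr_mul_sr]; congr 1; push_cast; ring)⟩
  inv_mem' := by
    rintro x ⟨n, rfl | rfl⟩
    · exact ⟨-n, Or.inl (by show r _ = _; congr 1; push_cast; ring)⟩
    · exact ⟨n, Or.inr rfl⟩

lemma mem_dihSub_r {i d : ZMod m} (n : ℤ) : r ((n : ZMod m) * d) ∈ dihSub i d :=
  ⟨n, Or.inl rfl⟩

lemma mem_dihSub_sr {i d : ZMod m} (n : ℤ) : sr (i + (n : ZMod m) * d) ∈ dihSub i d :=
  ⟨n, Or.inr rfl⟩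

lemma isUnit_of_dihSub_top {i d : ZMod m} (h : dihSub i d = ⊤) : IsUnit d := by
  have h1 : (r 1 : DihedralGroup m) ∈ dihSub i d := h ▸ Subgroup.mem_top _
  rcases h1 with ⟨n, hn | hn⟩
  · have h1' : ((n : ZMod m)) * d = 1 := by
      have := hn
      injection this with h2
      exact h2.symm
    exact IsUnit.of_mul_eq_one _ (by rw [mul_comm]; exact h1')
  · exact absurd hn (by simp)

def dihAutFun (u v : ZMod m) : DihedralGroup m → DihedralGroup m
  | r k => r (u * k)
  | sr k => sr (u * k + v)

lemma dihAutFun_mul (u v : ZMod m) (x y : DihedralGroup m) :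
    dihAutFun u v (x * y) = dihAutFun u v x * dihAutFun u v y := by
  rcases x with a | a <;> rcases y with b | b <;>
    simp only [r_mul_r, r_mul_sr, sr_mul_r, sr_mul_sr, dihAutFun] <;>
    (congr 1; ring)

/-- The automorphism of the dihedral group given by a unit `u` and a shift `v`. -/
def dihAut (u : (ZMod m)ˣ) (v : ZMod m) : DihedralGroup m ≃* DihedralGroup m where
  toFun := dihAutFun (u : ZMod m) v
  invFun := dihAutFun ((u⁻¹ : (ZMod m)ˣ) : ZMod m) (-(((u⁻¹ : (ZMod m)ˣ) : ZMod m) * v))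
  left_inv := by
    have hu : ((u⁻¹ : (ZMod m)ˣ) : ZMod m) * (u : ZMod m) = 1 := u.inv_mul
    rintro (a | a) <;> simp only [dihAutFun] <;> congr 1
    · linear_combination a * hu
    · linear_combination a * hu
  right_inv := by
    have hu : ((u : ZMod m)) * ((u⁻¹ : (ZMod m)ˣ) : ZMod m) = 1 := u.mul_inv
    rintro (a | a) <;> simp only [dihAutFun] <;> congr 1
    · linear_combination a * hu
    · linear_combination (a - v) * hu
  map_mul' := dihAutFun_mul _ _

@[simp] lemma dihAut_r (u : (ZMod m)ˣ) (v k : ZMod m) :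
    dihAut u v (r k) = r ((u : ZMod m) * k) := rfl

@[simp] lemma dihAut_sr (u : (ZMod m)ˣ) (v k : ZMod m) :
    dihAut u v (sr k) = sr ((u : ZMod m) * k + v) := rfl

lemma aut_r_eq (hm : 3 ≤ m) (α : DihedralGroup m ≃* DihedralGroup m) :
    ∃ u : ZMod m, IsUnit u ∧ ∀ k : ZMod m, α (r k) = r (u * k) := by
  haveI : NeZero m := ⟨by omega⟩
  have ho : orderOf (α (r 1)) = m := by
    have := orderOf_injective α.toMonoidHom α.injective (r 1)
    simpa using this
  rcases h : α (r 1) with u | t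
  · have hou : orderOf (r u : DihedralGroup m) = m := by rw [← h, ho]
    rw [orderOf_r] at hou
    have hgd : Nat.gcd m u.val ∣ m := Nat.gcd_dvd_left _ _
    have hg : Nat.gcd m u.val = 1 := by
      have h1 : m / Nat.gcd m u.val * Nat.gcd m u.val = m := Nat.div_mul_cancel hgd
      rw [hou] at h1
      rcases Nat.lt_or_ge (Nat.gcd m u.val) 2 with hlt | hge
      · interval_cases h : Nat.gcd m u.val
        · simp [h] at h1; omega
        · rfl
      · nlinarith
    have hu : IsUnit u := by
      rw [← ZMod.natCast_zmod_val u]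
      rw [ZMod.isUnit_iff_coprime]
      exact Nat.coprime_comm.mp hg
    refine ⟨u, hu, fun k => ?_⟩
    have hk : r k = (r 1 : DihedralGroup m) ^ k.val := by
      rw [r_one_pow, ZMod.natCast_zmod_val]
    rw [hk, map_pow, h, r_pow, ZMod.natCast_zmod_val, mul_comm]
  · exfalso
    rw [h, orderOf_sr] at ho
    omega

lemma aut_sr_eq (hm : 3 ≤ m) (α : DihedralGroup m ≃* DihedralGroup m) (t : ZMod m) :
    ∃ w, α (sr t) = sr w := by
  obtain ⟨u, hu, hr⟩ := aut_r_eq hm α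
  rcases h : α (sr t) with w | w
  · exfalso
    obtain ⟨U, rfl⟩ := hu
    have h2 : α (r (((U⁻¹ : (ZMod m)ˣ) : ZMod m) * w)) = r w := by
      rw [hr, ← mul_assoc]
      congr 1
      rw [U.mul_inv, one_mul]
    have h3 := α.injective (h2.trans h.symm)
    exact absurd h3 (by simp)
  · exact ⟨w, rfl⟩

end Dih

section Artin

variable {m : ℕ}

lemma I2_01 : I2 m 0 1 = m := by norm_num [I2]

lemma I2_10 : I2 m 1 0 = m := by norm_num [I2]

lemma mem_artinRels_iff (hm : m ≠ 0) {w : FreeGroup (Fin 2)} :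
    w ∈ artinRels (I2 m) ↔
      (w = altWord 0 1 m * (altWord 1 0 m)⁻¹ ∨ w = altWord 1 0 m * (altWord 0 1 m)⁻¹) := by
  constructor
  · rintro ⟨i, j, hij, hMij, rfl⟩
    fin_cases i <;> fin_cases j <;> simp only [I2_01, I2_10] <;> first
      | (exfalso; exact hij rfl)
      | (left; rfl)
      | (right; rfl)
  · rintro (rfl | rfl)
    · exact ⟨0, 1, by decide, by rw [I2_01]; exact hm, by rw [I2_01]⟩
    · exact ⟨1, 0, by decide, by rw [I2_10]; exact hm, by rw [I2_10]⟩

lemma hom_comp_mk {G : Type} [Group G] {rels : Set (FreeGroup (Fin 2))}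
    (φ : PresentedGroup rels →* G) (w : FreeGroup (Fin 2)) :
    φ (PresentedGroup.mk rels w) = FreeGroup.lift (fun i => φ (PresentedGroup.of i)) w := by
  have h : φ.comp (PresentedGroup.mk rels) = FreeGroup.lift (fun i => φ (PresentedGroup.of i)) :=
    FreeGroup.ext_hom _ _ (fun x => by simp [PresentedGroup.of])
  have := congrArg (fun ψ => (ψ : FreeGroup (Fin 2) →* G) w) h
  simpa using this

lemma hom_mk_altWord {G : Type} [Group G] {rels : Set (FreeGroup (Fin 2))}
    (φ : PresentedGroup rels →* G) (i j : Fin 2) (k : ℕ) :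
    φ (PresentedGroup.mk rels (altWord i j k))
      = altG (φ (PresentedGroup.of i)) (φ (PresentedGroup.of j)) k := by
  rw [hom_comp_mk, lift_altWord]

lemma rel_mk_eq_one {rels : Set (FreeGroup (Fin 2))} {w : FreeGroup (Fin 2)} (hw : w ∈ rels) :
    PresentedGroup.mk rels w = 1 :=
  (QuotientGroup.eq_one_iff w).mpr (Subgroup.subset_normalClosure hw)

/-- Any hom from the Artin group satisfies the braid relation on generators. -/
lemma artinHom_braid (hm : m ≠ 0) {G : Type} [Group G] (φ : ArtinGroup (I2 m) →* G) :
    altG (φ (σA (I2 m) 0)) (φ (σA (I2 m) 1)) m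
      = altG (φ (σA (I2 m) 1)) (φ (σA (I2 m) 0)) m := by
  have hrel := rel_mk_eq_one ((mem_artinRels_iff hm).mpr
    (Or.inl rfl) : altWord 0 1 m * (altWord 1 0 m)⁻¹ ∈ artinRels (I2 m))
  have h2 := congrArg φ hrel
  simp only [map_mul, map_inv, map_one] at h2
  rw [hom_mk_altWord, hom_mk_altWord] at h2
  exact mul_inv_eq_one.mp h2

lemma lift_artinRels_eq_one {G : Type} [Group G] {a b : G} (h : altG a b m = altG b a m) :
    ∀ w ∈ artinRels (I2 m), FreeGroup.lift (fun i : Fin 2 => if i = 0 then a else b) w = 1 := by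
  rintro w ⟨i, j, hij, hMij, rfl⟩
  have hcases : ∀ x : Fin 2, x = 0 ∨ x = 1 := by decide
  rcases hcases i with rfl | rfl <;> rcases hcases j with rfl | rfl
  · exact absurd rfl hij
  · rw [I2_01, map_mul, map_inv, lift_altWord, lift_altWord]
    norm_num
    rw [h, mul_inv_cancel]
  · rw [I2_10, map_mul, map_inv, lift_altWord, lift_altWord]
    norm_num
    rw [h, mul_inv_cancel]
  · exact absurd rfl hij

/-- Build a hom from the Artin group out of a pair satisfying the braid relation. -/
def mkArtinHom {G : Type} [Group G] {a b : G} (h : altG a b m = altG b a m) :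
    ArtinGroup (I2 m) →* G :=
  PresentedGroup.toGroup (lift_artinRels_eq_one h)

@[simp] lemma mkArtinHom_0 {G : Type} [Group G] {a b : G} (h : altG a b m = altG b a m) :
    mkArtinHom h (σA (I2 m) 0) = a := by
  show PresentedGroup.toGroup _ (PresentedGroup.of 0) = a
  rw [PresentedGroup.toGroup.of]
  simp

@[simp] lemma mkArtinHom_1 {G : Type} [Group G] {a b : G} (h : altG a b m = altG b a m) :
    mkArtinHom h (σA (I2 m) 1) = b := by
  show PresentedGroup.toGroup _ (PresentedGroup.of 1) = b
  rw [PresentedGroup.toGroup.of]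
  simp

lemma artinHom_ext {G : Type} [Group G] {φ ψ : ArtinGroup (I2 m) →* G}
    (h0 : φ (σA (I2 m) 0) = ψ (σA (I2 m) 0)) (h1 : φ (σA (I2 m) 1) = ψ (σA (I2 m) 1)) :
    φ = ψ := by
  apply PresentedGroup.ext
  intro i
  fin_cases i
  · exact h0
  · exact h1

lemma range_artinHom {G : Type} [Group G] (φ : ArtinGroup (I2 m) →* G) :
    φ.range = Subgroup.closure {φ (σA (I2 m) 0), φ (σA (I2 m) 1)} := by
  have himg : φ '' Set.range (PresentedGroup.of : Fin 2 → ArtinGroup (I2 m))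
      = {φ (σA (I2 m) 0), φ (σA (I2 m) 1)} := by
    ext x
    constructor
    · rintro ⟨y, ⟨i, rfl⟩, rfl⟩
      fin_cases i
      · exact Or.inl rfl
      · exact Or.inr rfl
    · rintro (rfl | rfl)
      · exact ⟨_, ⟨0, rfl⟩, rfl⟩
      · exact ⟨_, ⟨1, rfl⟩, rfl⟩
  rw [MonoidHom.range_eq_map, ← PresentedGroup.closure_range_of (artinRels (I2 m)),
    MonoidHom.map_closure, himg]

lemma surjective_artinHom_iff {G : Type} [Group G] (φ : ArtinGroup (I2 m) →* G) :
    Function.Surjective φ ↔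
      Subgroup.closure {φ (σA (I2 m) 0), φ (σA (I2 m) 1)} = ⊤ := by
  rw [← MonoidHom.range_eq_top, range_artinHom]

end Artin


section Cox

open DihedralGroup

variable (m : ℕ)

lemma sC_mul_self (i : Fin 2) : sC (I2 m) i * sC (I2 m) i = 1 := by
  have h := rel_mk_eq_one (rels := coxRels (I2 m))
    (Set.mem_union_right _ ⟨i, rfl⟩)
  rw [map_pow, pow_two] at h
  exact h

lemma sC_inv (i : Fin 2) : (sC (I2 m) i)⁻¹ = sC (I2 m) i :=
  inv_eq_of_mul_eq_one_right (sC_mul_self m i)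

/-- ρ = s₀ s₁ in the Coxeter group. -/
def ρc : CoxGroup (I2 m) := sC (I2 m) 0 * sC (I2 m) 1

lemma ρc_inv : (ρc m)⁻¹ = sC (I2 m) 1 * sC (I2 m) 0 := by
  rw [ρc, mul_inv_rev, sC_inv, sC_inv]

lemma cox_braid (hm : m ≠ 0) :
    altG (sC (I2 m) 0) (sC (I2 m) 1) m = altG (sC (I2 m) 1) (sC (I2 m) 0) m := by
  have hrel := rel_mk_eq_one (rels := coxRels (I2 m))
    (Set.mem_union_left _ ((mem_artinRels_iff hm).mpr (Or.inl rfl)))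
  have h2 := congrArg (MonoidHom.id (CoxGroup (I2 m))) hrel
  simp only [map_mul, map_inv, map_one] at h2
  rw [hom_mk_altWord, hom_mk_altWord] at h2
  simpa [sC] using mul_inv_eq_one.mp h2

lemma ρc_pow_m (hm : m ≠ 0) : ρc m ^ m = 1 := by
  have hb := cox_braid m hm
  have h10 : sC (I2 m) 1 * sC (I2 m) 0 = (ρc m)⁻¹ := (ρc_inv m).symm
  rcases Nat.even_or_odd m with ⟨k, hk⟩ | ⟨k, hk⟩
  · have hk' : m = 2 * k := by omega
    rw [congrArg (altG _ _) hk', congrArg (altG _ _) hk'] at hb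
    rw [altG_two_mul, altG_two_mul, h10] at hb
    have hb2 : ρc m ^ k = ((ρc m)⁻¹) ^ k := hb
    rw [inv_pow] at hb2
    have hb' : ρc m ^ k = (ρc m ^ k)⁻¹ := hb2
    rw [congrArg (ρc m ^ ·) hk']
    show ρc m ^ (2 * k) = 1
    rw [two_mul, pow_add]
    nth_rewrite 1 [hb']
    rw [inv_mul_cancel]
  · rw [congrArg (altG _ _) hk, congrArg (altG _ _) hk] at hb
    rw [altG_two_mul_add_one, altG_two_mul_add_one, h10, inv_pow] at hb
    have hb2 : ρc m ^ k * sC (I2 m) 0 = (ρc m ^ k)⁻¹ * sC (I2 m) 1 := hb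
    have h2 : ρc m ^ (2 * k) = sC (I2 m) 1 * sC (I2 m) 0 := by
      have : ρc m ^ (2 * k) * sC (I2 m) 0 = sC (I2 m) 1 := by
        rw [two_mul, pow_add, mul_assoc, hb2, ← mul_assoc, mul_inv_cancel, one_mul]
      calc ρc m ^ (2 * k) = ρc m ^ (2 * k) * sC (I2 m) 0 * sC (I2 m) 0 := by
            rw [mul_assoc, sC_mul_self, mul_one]
        _ = sC (I2 m) 1 * sC (I2 m) 0 := by rw [this]
    rw [congrArg (ρc m ^ ·) hk]
    show ρc m ^ (2 * k + 1) = 1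
    rw [pow_succ, h2, h10, inv_mul_cancel]

section NZ
variable [NeZero m]

/-- ρ^i for i : ZMod m. -/
def χc (i : ZMod m) : CoxGroup (I2 m) := ρc m ^ i.val

lemma pow_val_mod (x : ℕ) : ρc m ^ (x % m) = ρc m ^ x := by
  conv_rhs => rw [← Nat.div_add_mod x m]
  rw [pow_add, pow_mul, ρc_pow_m m (NeZero.ne m), one_pow, one_mul]

lemma χc_add (i j : ZMod m) : χc m (i + j) = χc m i * χc m j := by
  rw [χc, χc, χc, ZMod.val_add, pow_val_mod, pow_add]

lemma χc_zero : χc m 0 = 1 := by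
  rw [χc, ZMod.val_zero, pow_zero]

lemma χc_natCast (n : ℕ) : χc m ((n : ZMod m)) = ρc m ^ n := by
  rw [χc, ZMod.val_natCast, pow_val_mod]

lemma χc_neg (i : ZMod m) : χc m (-i) = (χc m i)⁻¹ := by
  have h : χc m i * χc m (-i) = 1 := by rw [← χc_add, add_neg_cancel, χc_zero]
  exact (inv_eq_of_mul_eq_one_right h).symm

lemma τ_conj_pow (n : ℕ) : sC (I2 m) 0 * ρc m ^ n * sC (I2 m) 0 = (ρc m ^ n)⁻¹ := by
  have hss' : ∀ x : CoxGroup (I2 m), sC (I2 m) 0 * (sC (I2 m) 0 * x) = x := by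
    intro x
    rw [← mul_assoc, sC_mul_self, one_mul]
  induction n with
  | zero => simp [sC_mul_self]
  | succ n ih =>
      have hτρτ : sC (I2 m) 0 * ρc m * sC (I2 m) 0 = (ρc m)⁻¹ := by
        rw [ρc_inv, ρc, ← mul_assoc, sC_mul_self, one_mul]
      calc sC (I2 m) 0 * ρc m ^ (n + 1) * sC (I2 m) 0
          = (sC (I2 m) 0 * ρc m ^ n * sC (I2 m) 0) *
            (sC (I2 m) 0 * ρc m * sC (I2 m) 0) := by
            simp only [pow_succ, mul_assoc, hss']
      _ = (ρc m ^ n)⁻¹ * (ρc m)⁻¹ := by rw [ih, hτρτ]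
      _ = (ρc m ^ (n + 1))⁻¹ := by rw [pow_succ', mul_inv_rev]
  
lemma τ_conj_χ (i : ZMod m) : sC (I2 m) 0 * χc m i * sC (I2 m) 0 = χc m (-i) := by
  rw [χc, τ_conj_pow, χc_neg, χc]

lemma χ_swap_τ (i : ZMod m) : χc m i * sC (I2 m) 0 = sC (I2 m) 0 * χc m (-i) := by
  have h := τ_conj_χ m i
  calc χc m i * sC (I2 m) 0
      = sC (I2 m) 0 * (sC (I2 m) 0 * χc m i * sC (I2 m) 0) := by
        rw [← mul_assoc, ← mul_assoc, sC_mul_self, one_mul]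
  _ = sC (I2 m) 0 * χc m (-i) := by rw [h]

/-- The underlying function of the hom `DihedralGroup m → CoxGroup`. -/
def gfun : DihedralGroup m → CoxGroup (I2 m)
  | DihedralGroup.r i => χc m i
  | DihedralGroup.sr i => sC (I2 m) 0 * χc m i

/-- The hom `DihedralGroup m →* CoxGroup`. -/
def gHom : DihedralGroup m →* CoxGroup (I2 m) where
  toFun := gfun m
  map_one' := by
    show gfun m (DihedralGroup.r 0) = 1
    show χc m 0 = 1
    exact χc_zero m
  map_mul' := by
    rintro (a | a) (b | b)
    · show χc m (a + b) = χc m a * χc m b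
      exact χc_add m a b
    · show sC (I2 m) 0 * χc m (b - a) = χc m a * (sC (I2 m) 0 * χc m b)
      rw [← mul_assoc, χ_swap_τ, mul_assoc, ← χc_add]
      congr 1
      ring_nf
    · show sC (I2 m) 0 * χc m (a + b) = sC (I2 m) 0 * χc m a * χc m b
      rw [mul_assoc, ← χc_add]
    · show χc m (b - a) = sC (I2 m) 0 * χc m a * (sC (I2 m) 0 * χc m b)
      rw [mul_assoc, ← mul_assoc (χc m a), χ_swap_τ, ← mul_assoc, ← mul_assoc,
        sC_mul_self, one_mul, ← χc_add]
      congr 1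
      ring

/-- The hom `CoxGroup →* DihedralGroup m`. -/
def fHom : CoxGroup (I2 m) →* DihedralGroup m :=
  PresentedGroup.toGroup (f := fun i : Fin 2 =>
    if i = 0 then DihedralGroup.sr 0 else DihedralGroup.sr 1) (by
    rintro w (hw | ⟨i, rfl⟩)
    · exact lift_artinRels_eq_one (braid_sr_sr 0 1) w hw
    · rw [map_pow]
      rcases (by decide : ∀ x : Fin 2, x = 0 ∨ x = 1) i with rfl | rfl <;>
        · norm_num
          rw [pow_two, sr_mul_self])

lemma fHom_s0 : fHom m (sC (I2 m) 0) = DihedralGroup.sr 0 := by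
  show PresentedGroup.toGroup _ (PresentedGroup.of 0) = _
  rw [PresentedGroup.toGroup.of]
  simp

lemma fHom_s1 : fHom m (sC (I2 m) 1) = DihedralGroup.sr 1 := by
  show PresentedGroup.toGroup _ (PresentedGroup.of 1) = _
  rw [PresentedGroup.toGroup.of]
  simp

lemma fHom_ρc : fHom m (ρc m) = DihedralGroup.r 1 := by
  rw [ρc, map_mul, fHom_s0, fHom_s1, sr_mul_sr, sub_zero]

lemma fHom_gHom (x : DihedralGroup m) : fHom m (gHom m x) = x := by
  have hχ : ∀ i : ZMod m, fHom m (χc m i) = DihedralGroup.r i := by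
    intro i
    rw [χc, map_pow, fHom_ρc, r_one_pow, ZMod.natCast_zmod_val]
  rcases x with a | a
  · exact hχ a
  · show fHom m (sC (I2 m) 0 * χc m a) = _
    rw [map_mul, fHom_s0, hχ, sr_mul_r, zero_add]

lemma gHom_fHom : (gHom m).comp (fHom m) = MonoidHom.id (CoxGroup (I2 m)) := by
  apply PresentedGroup.ext
  intro i
  rcases (by decide : ∀ x : Fin 2, x = 0 ∨ x = 1) i with rfl | rfl
  · show gHom m (fHom m (sC (I2 m) 0)) = sC (I2 m) 0
    rw [fHom_s0]
    show sC (I2 m) 0 * χc m 0 = sC (I2 m) 0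
    rw [χc_zero, mul_one]
  · show gHom m (fHom m (sC (I2 m) 1)) = sC (I2 m) 1
    rw [fHom_s1]
    show sC (I2 m) 0 * χc m 1 = sC (I2 m) 1
    rw [show ((1 : ZMod m)) = ((1 : ℕ) : ZMod m) by norm_num, χc_natCast, pow_one, ρc,
      ← mul_assoc, sC_mul_self, one_mul]

/-- The isomorphism between the Coxeter group of type I₂(m) and the dihedral group. -/
def eIso : CoxGroup (I2 m) ≃* DihedralGroup m :=
  MonoidHom.toMulEquiv (fHom m) (gHom m) (gHom_fHom m)
    (by ext x; exact fHom_gHom m x)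

lemma eIso_s0 : eIso m (sC (I2 m) 0) = DihedralGroup.sr 0 := fHom_s0 m
lemma eIso_s1 : eIso m (sC (I2 m) 1) = DihedralGroup.sr 1 := fHom_s1 m

end NZ
end Cox

section Glue

open DihedralGroup

lemma map_altG {G H : Type} [Group G] [Group H] {F : Type*} [FunLike F G H]
    [MonoidHomClass F G H] (f : F) (a b : G) (n : ℕ) :
    f (altG a b n) = altG (f a) (f b) n := by
  induction n generalizing a b with
  | zero => simp [altG]
  | succ n ih => simp [altG, ih]

variable {m : ℕ}

/-- Two homs to the Coxeter group whose dihedral values differ by an automorphism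
`dihAut u v` are equivalent. -/
lemma equiv_of_pairs [NeZero m] (φ ψ0 : ArtinGroup (I2 m) →* CoxGroup (I2 m))
    (u : (ZMod m)ˣ) (v : ZMod m)
    (h0 : eIso m (φ (σA (I2 m) 0)) = dihAut u v (eIso m (ψ0 (σA (I2 m) 0))))
    (h1 : eIso m (φ (σA (I2 m) 1)) = dihAut u v (eIso m (ψ0 (σA (I2 m) 1)))) :
    ∃ α : CoxGroup (I2 m) ≃* CoxGroup (I2 m), φ = α.toMonoidHom.comp ψ0 := by
  refine ⟨((eIso m).trans (dihAut u v)).trans (eIso m).symm, ?_⟩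
  apply artinHom_ext
  · apply (eIso m).injective
    rw [h0]
    simp [MulEquiv.trans_apply]
  · apply (eIso m).injective
    rw [h1]
    simp [MulEquiv.trans_apply]

lemma unit_of_closure_sr_r [NeZero m] {i k : ZMod m}
    (h : Subgroup.closure {(sr i : DihedralGroup m), r k} = ⊤) : IsUnit k := by
  apply isUnit_of_dihSub_top (i := i)
  rw [eq_top_iff, ← h]
  refine (Subgroup.closure_le _).mpr ?_
  rintro x hx
  simp only [Set.mem_insert_iff, Set.mem_singleton_iff] at hx
  rcases hx with rfl | rfl
  · simpa using mem_dihSub_sr (m := m) (i := i) (d := k) 0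
  · simpa using mem_dihSub_r (m := m) (i := i) (d := k) 1

lemma unit_of_closure_r_sr [NeZero m] {i k : ZMod m}
    (h : Subgroup.closure {(r k : DihedralGroup m), sr i} = ⊤) : IsUnit k := by
  apply unit_of_closure_sr_r (i := i)
  rwa [Set.pair_comm]

lemma unit_of_closure_sr_sr [NeZero m] {i j : ZMod m}
    (h : Subgroup.closure {(sr i : DihedralGroup m), sr j} = ⊤) : IsUnit (j - i) := by
  apply isUnit_of_dihSub_top (i := i)
  rw [eq_top_iff, ← h]
  refine (Subgroup.closure_le _).mpr ?_
  rintro x hx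
  simp only [Set.mem_insert_iff, Set.mem_singleton_iff] at hx
  rcases hx with rfl | rfl
  · simpa using mem_dihSub_sr (m := m) (i := i) (d := j - i) 0
  · have := mem_dihSub_sr (m := m) (i := i) (d := j - i) 1
    simpa using this

lemma not_rot_gen [NeZero m] {i k : ZMod m}
    (h : Subgroup.closure {(r i : DihedralGroup m), r k} = ⊤) : False := by
  have hle : Subgroup.closure {(r i : DihedralGroup m), r k} ≤ rotSub m := by
    refine (Subgroup.closure_le _).mpr ?_
    rintro x hx
    simp only [Set.mem_insert_iff, Set.mem_singleton_iff] at hx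
    rcases hx with rfl | rfl
    exacts [⟨i, rfl⟩, ⟨k, rfl⟩]
  have hmem : (sr 0 : DihedralGroup m) ∈ rotSub m := hle (h ▸ Subgroup.mem_top _)
  obtain ⟨t, ht⟩ := hmem
  exact absurd ht (by simp)

lemma pairdata (hm0 : m ≠ 0) [NeZero m] (φ : ArtinGroup (I2 m) →* CoxGroup (I2 m))
    (hφ : Function.Surjective φ) :
    altG (eIso m (φ (σA (I2 m) 0))) (eIso m (φ (σA (I2 m) 1))) m
      = altG (eIso m (φ (σA (I2 m) 1))) (eIso m (φ (σA (I2 m) 0))) m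
    ∧ Subgroup.closure {eIso m (φ (σA (I2 m) 0)), eIso m (φ (σA (I2 m) 1))} = ⊤ := by
  have hψs : Function.Surjective ((eIso m).toMonoidHom.comp φ) := by
    rw [MonoidHom.coe_comp]
    exact (eIso m).surjective.comp hφ
  have hb := artinHom_braid hm0 ((eIso m).toMonoidHom.comp φ)
  rw [surjective_artinHom_iff] at hψs
  simp only [MonoidHom.comp_apply, MulEquiv.coe_toMonoidHom] at hb hψs
  exact ⟨hb, hψs⟩

lemma surj_of_closure [NeZero m] (hm0 : m ≠ 0) (φ : ArtinGroup (I2 m) →* CoxGroup (I2 m))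
    (h : Subgroup.closure {eIso m (φ (σA (I2 m) 0)), eIso m (φ (σA (I2 m) 1))} = ⊤) :
    Function.Surjective φ := by
  have hs : Function.Surjective ((eIso m).toMonoidHom.comp φ) := by
    rw [surjective_artinHom_iff]
    simpa only [MonoidHom.comp_apply, MulEquiv.coe_toMonoidHom] using h
  intro y
  obtain ⟨x, hx⟩ := hs (eIso m y)
  refine ⟨x, (eIso m).injective ?_⟩
  simpa only [MonoidHom.comp_apply, MulEquiv.coe_toMonoidHom] using hx

lemma closure_sr_r_top [NeZero m] {i k : ZMod m} (hu : IsUnit k) :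
    Subgroup.closure {(sr i : DihedralGroup m), r k} = ⊤ := by
  rw [eq_top_iff']
  intro x
  set H := Subgroup.closure {(sr i : DihedralGroup m), r k}
  have hrk : (r k : DihedralGroup m) ∈ H :=
    Subgroup.subset_closure (Set.mem_insert_of_mem _ rfl)
  have hsri : (sr i : DihedralGroup m) ∈ H :=
    Subgroup.subset_closure (Set.mem_insert _ _)
  have hrall : ∀ t : ZMod m, (r t : DihedralGroup m) ∈ H := by
    intro t
    obtain ⟨U, hU⟩ := hu
    have h1 : (r t : DihedralGroup m) = (r k) ^ ((U⁻¹ : (ZMod m)ˣ) * t : ZMod m).val := by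
      rw [r_pow, ZMod.natCast_zmod_val]
      congr 1
      have : (U : ZMod m) * ((U⁻¹ : (ZMod m)ˣ) : ZMod m) = 1 := U.mul_inv
      rw [← hU]
      linear_combination (-t) * this
    rw [h1]
    exact pow_mem hrk _
  rcases x with t | t
  · exact hrall t
  · have : (sr t : DihedralGroup m) = sr i * r (t - i) := by
      rw [sr_mul_r]
      congr 1
      ring
    rw [this]
    exact mul_mem hsri (hrall _)

lemma closure_r_sr_top [NeZero m] {i k : ZMod m} (hu : IsUnit k) :
    Subgroup.closure {(r k : DihedralGroup m), sr i} = ⊤ := by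
  rw [Set.pair_comm]
  exact closure_sr_r_top hu

lemma beta_sr (hm : 3 ≤ m) [NeZero m] (α : CoxGroup (I2 m) ≃* CoxGroup (I2 m))
    (t : ZMod m) (x : CoxGroup (I2 m)) (hx : eIso m x = sr t) :
    ∃ w, eIso m (α x) = sr w := by
  obtain ⟨w, hw⟩ := aut_sr_eq hm ((eIso m).symm.trans (α.trans (eIso m))) t
  refine ⟨w, ?_⟩
  have h2 : ((eIso m).symm.trans (α.trans (eIso m))) (sr t) = eIso m (α x) := by
    rw [← hx]
    simp [MulEquiv.trans_apply]
  rw [← h2, hw]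

end Glue

end Stmt3

open Stmt3 DihedralGroup

/-- Classification of the epimorphisms `A → W` for type `I₂(m)`, `m ≥ 3`:
all are ordinary when `m ≢ 0 (mod 4)`; when `m ≡ 0 (mod 4)` there are exactly two
equivalence classes of extraordinary ones, represented by `ν_m^1` and `ν_m^2`. -/
theorem stmt_3 (m : ℕ) (hm : 3 ≤ m) :
    (m % 4 ≠ 0 →
      ∀ φ : ArtinGroup (I2 m) →* CoxGroup (I2 m), Function.Surjective φ → Ordinary φ) ∧
    (m % 4 = 0 →
      ∃ ν₁ ν₂ : ArtinGroup (I2 m) →* CoxGroup (I2 m),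
        ν₁ (σA (I2 m) 0) = sC (I2 m) 0 ∧
        ν₁ (σA (I2 m) 1) = sC (I2 m) 1 * sC (I2 m) 0 ∧
        ν₂ (σA (I2 m) 0) = sC (I2 m) 0 * sC (I2 m) 1 ∧
        ν₂ (σA (I2 m) 1) = sC (I2 m) 1 ∧
        Function.Surjective ν₁ ∧ Function.Surjective ν₂ ∧
        ¬ Ordinary ν₁ ∧ ¬ Ordinary ν₂ ∧
        ¬ (∃ α : CoxGroup (I2 m) ≃* CoxGroup (I2 m), ν₂ = α.toMonoidHom.comp ν₁) ∧
        (∀ φ : ArtinGroup (I2 m) →* CoxGroup (I2 m),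
          Function.Surjective φ → ¬ Ordinary φ →
          (∃ α : CoxGroup (I2 m) ≃* CoxGroup (I2 m), φ = α.toMonoidHom.comp ν₁) ∨
          (∃ α : CoxGroup (I2 m) ≃* CoxGroup (I2 m), φ = α.toMonoidHom.comp ν₂))) := by
  haveI : NeZero m := ⟨by omega⟩
  have hm0 : m ≠ 0 := by omega
  constructor
  · -- m % 4 ≠ 0 : every epimorphism is ordinary
    intro h4 φ hφ
    obtain ⟨hb, hcl⟩ := pairdata hm0 φ hφ
    rcases ha : eIso m (φ (σA (I2 m) 0)) with i | i <;>
      rcases hbv : eIso m (φ (σA (I2 m) 1)) with k | k <;>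
      rw [ha, hbv] at hb hcl
    · exact absurd hcl not_rot_gen
    · exact absurd hb.symm (braid_mixed_fails hm h4 (unit_of_closure_r_sr hcl))
    · exact absurd hb (braid_mixed_fails hm h4 (unit_of_closure_sr_r hcl))
    · have hu := unit_of_closure_sr_sr hcl
      show ∃ α : CoxGroup (I2 m) ≃* CoxGroup (I2 m),
        φ = α.toMonoidHom.comp (stdEpi (I2 m))
      refine equiv_of_pairs φ (stdEpi (I2 m)) hu.unit i ?_ ?_
      · rw [ha, stdEpi_of, eIso_s0, dihAut_sr]
        congr 1
        simp
      · rw [hbv, stdEpi_of, eIso_s1, dihAut_sr]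
        congr 1
        rw [IsUnit.unit_spec]
        ring
  · -- m % 4 = 0
    intro h4
    have he10 : eIso m (sC (I2 m) 1 * sC (I2 m) 0) = r (-1) := by
      rw [map_mul, eIso_s0, eIso_s1, sr_mul_sr]
      norm_num
    have he01 : eIso m (sC (I2 m) 0 * sC (I2 m) 1) = r 1 := by
      rw [map_mul, eIso_s0, eIso_s1, sr_mul_sr]
      norm_num
    have hbraid1 : altG (sC (I2 m) 0) (sC (I2 m) 1 * sC (I2 m) 0) m
        = altG (sC (I2 m) 1 * sC (I2 m) 0) (sC (I2 m) 0) m := by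
      apply (eIso m).injective
      rw [map_altG, map_altG, eIso_s0, he10]
      exact (braid_sr_r h4 0 (-1)).1
    have hbraid2 : altG (sC (I2 m) 0 * sC (I2 m) 1) (sC (I2 m) 1) m
        = altG (sC (I2 m) 1) (sC (I2 m) 0 * sC (I2 m) 1) m := by
      apply (eIso m).injective
      rw [map_altG, map_altG, eIso_s1, he01]
      exact (braid_sr_r h4 1 1).2
    have hv10 : eIso m ((mkArtinHom hbraid1) (σA (I2 m) 0)) = sr 0 := by
      rw [mkArtinHom_0, eIso_s0]
    have hv11 : eIso m ((mkArtinHom hbraid1) (σA (I2 m) 1)) = r (-1) := by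
      rw [mkArtinHom_1, he10]
    have hv20 : eIso m ((mkArtinHom hbraid2) (σA (I2 m) 0)) = r 1 := by
      rw [mkArtinHom_0, he01]
    have hv21 : eIso m ((mkArtinHom hbraid2) (σA (I2 m) 1)) = sr 1 := by
      rw [mkArtinHom_1, eIso_s1]
    refine ⟨mkArtinHom hbraid1, mkArtinHom hbraid2,
      mkArtinHom_0 _, mkArtinHom_1 _, mkArtinHom_0 _, mkArtinHom_1 _,
      ?_, ?_, ?_, ?_, ?_, ?_⟩
    · -- Surjective ν₁
      apply surj_of_closure hm0
      rw [hv10, hv11]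
      exact closure_sr_r_top isUnit_one.neg
    · -- Surjective ν₂
      apply surj_of_closure hm0
      rw [hv20, hv21]
      exact closure_r_sr_top isUnit_one
    · -- ¬ Ordinary ν₁
      rintro ⟨α, hα⟩
      have h := DFunLike.congr_fun hα (σA (I2 m) 1)
      simp only [MonoidHom.comp_apply, MulEquiv.coe_toMonoidHom, stdEpi_of] at h
      obtain ⟨w, hw⟩ := beta_sr hm α 1 (sC (I2 m) 1) (eIso_s1 m)
      have h2 := congrArg (eIso m) h
      rw [hv11, hw] at h2
      exact absurd h2 (by simp)
    · -- ¬ Ordinary ν₂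
      rintro ⟨α, hα⟩
      have h := DFunLike.congr_fun hα (σA (I2 m) 0)
      simp only [MonoidHom.comp_apply, MulEquiv.coe_toMonoidHom, stdEpi_of] at h
      obtain ⟨w, hw⟩ := beta_sr hm α 0 (sC (I2 m) 0) (eIso_s0 m)
      have h2 := congrArg (eIso m) h
      rw [hv20, hw] at h2
      exact absurd h2 (by simp)
    · -- ν₂ inequivalent to ν₁
      rintro ⟨α, hα⟩
      have h := DFunLike.congr_fun hα (σA (I2 m) 0)
      simp only [MonoidHom.comp_apply, MulEquiv.coe_toMonoidHom] at h
      obtain ⟨w, hw⟩ := beta_sr hm α 0 ((mkArtinHom hbraid1) (σA (I2 m) 0)) hv10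
      have h2 := congrArg (eIso m) h
      rw [hv20, hw] at h2
      exact absurd h2 (by simp)
    · -- classification
      intro φ hφ hnot
      obtain ⟨hb, hcl⟩ := pairdata hm0 φ hφ
      rcases ha : eIso m (φ (σA (I2 m) 0)) with i | i <;>
        rcases hbv : eIso m (φ (σA (I2 m) 1)) with k | k <;>
        rw [ha, hbv] at hb hcl
      · exact absurd hcl not_rot_gen
      · -- (r i, sr k) : equivalent to ν₂
        have hu := unit_of_closure_r_sr hcl
        refine Or.inr (equiv_of_pairs φ (mkArtinHom hbraid2) hu.unit (k - i) ?_ ?_)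
        · rw [ha, hv20, dihAut_r]
          congr 1
          rw [IsUnit.unit_spec]
          ring
        · rw [hbv, hv21, dihAut_sr]
          congr 1
          rw [IsUnit.unit_spec]
          ring
      · -- (sr i, r k) : equivalent to ν₁
        have hu := unit_of_closure_sr_r hcl
        refine Or.inl (equiv_of_pairs φ (mkArtinHom hbraid1) hu.neg.unit i ?_ ?_)
        · rw [ha, hv10, dihAut_sr]
          congr 1
          simp
        · rw [hbv, hv11, dihAut_r]
          congr 1
          rw [IsUnit.unit_spec]
          ring
      · -- (sr i, sr k) : ordinary, contradiction
        exfalso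
        apply hnot
        have hu := unit_of_closure_sr_sr hcl
        show ∃ α : CoxGroup (I2 m) ≃* CoxGroup (I2 m),
          φ = α.toMonoidHom.comp (stdEpi (I2 m))
        refine equiv_of_pairs φ (stdEpi (I2 m)) hu.unit i ?_ ?_
        · rw [ha, stdEpi_of, eIso_s0, dihAut_sr]
          congr 1
          simp
        · rw [hbv, stdEpi_of, eIso_s1, dihAut_sr]
          congr 1
          rw [IsUnit.unit_spec]
          ring
end

section
/- Let m ≥ 3 and let A be the Artin group of type I_2(m) with standard epimorphism μ: A → W onto the dihedral Coxeter group of type I_2(m). Then the colored Artin group CA = ker μ is a characteristic subgroup of A. -/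
open Function

section AltProd

variable {G : Type*} [Group G]

/-- alternating product of group elements -/
def altProd (a b : G) : ℕ → G
  | 0 => 1
  | m + 1 => a * altProd b a m

@[simp] lemma altProd_zero (a b : G) : altProd a b 0 = 1 := rfl

lemma altProd_succ (a b : G) (k : ℕ) : altProd a b (k+1) = a * altProd b a k := rfl

lemma lift_altWord {α : Type*} (f : α → G) (k : ℕ) (i j : α) :
    FreeGroup.lift f (altWord i j k) = altProd (f i) (f j) k := by
  induction k generalizing i j with
  | zero => simp [altWord, altProd]
  | succ k ih => simp [altWord, altProd, ih]

lemma map_altProd {H : Type*} [Group H] (h : G →* H) (a b : G) (k : ℕ) :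
    h (altProd a b k) = altProd (h a) (h b) k := by
  induction k generalizing a b with
  | zero => simp
  | succ k ih => simp [altProd_succ, ih]

lemma altProd_two_mul (a b : G) (k : ℕ) : altProd a b (2 * k) = (a * b) ^ k := by
  induction k generalizing a b with
  | zero => simp
  | succ k ih =>
      have : 2 * (k + 1) = (2 * k) + 1 + 1 := by ring
      rw [this, altProd_succ, altProd_succ, ih, pow_succ']
      group

lemma mul_pow_swap (a b : G) (k : ℕ) : a * (b * a) ^ k = (a * b) ^ k * a := by
  induction k with
  | zero => simp
  | succ k ih =>
      rw [pow_succ', pow_succ', mul_assoc (a*b), ← ih]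
      simp [mul_assoc]

lemma altProd_odd (a b : G) (k : ℕ) : altProd a b (2 * k + 1) = (a * b) ^ k * a := by
  rw [altProd_succ, altProd_two_mul, mul_pow_swap]

lemma conj_pow_mul (x y : G) (k : ℕ) : (y * x) ^ k = x⁻¹ * (x * y) ^ k * x := by
  induction k with
  | zero => simp
  | succ k ih => rw [pow_succ, pow_succ, ih]; group

end AltProd
section I2Basics

variable {m : ℕ} {G : Type*} [Group G]

lemma I2_off {i j : Fin 2} (h : i ≠ j) : I2 m i j = m := by simp [I2, h]

lemma liftA_eq_mk :
    (FreeGroup.lift (fun i => (PresentedGroup.of i : ArtinGroup (I2 m))))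
      = PresentedGroup.mk (artinRels (I2 m)) :=
  FreeGroup.ext_hom _ _ (fun x => by simp [PresentedGroup.of])

/-- homomorphism out of the Artin group -/
def mkHomA (f : Fin 2 → G)
    (hbr : altProd (f 0) (f 1) m = altProd (f 1) (f 0) m) :
    ArtinGroup (I2 m) →* G :=
  PresentedGroup.toGroup (f := f) (by
    rintro r ⟨i, j, hij, -, rfl⟩
    rw [map_mul, map_inv, lift_altWord, lift_altWord, I2_off hij]
    fin_cases i <;> fin_cases j <;> simp_all)

@[simp] lemma mkHomA_of (f : Fin 2 → G)
    (hbr : altProd (f 0) (f 1) m = altProd (f 1) (f 0) m) (i : Fin 2) :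
    mkHomA f hbr (σA (I2 m) i) = f i :=
  PresentedGroup.toGroup.of _

/-- homomorphism out of the Coxeter group -/
def mkHomW (f : Fin 2 → G)
    (hbr : altProd (f 0) (f 1) m = altProd (f 1) (f 0) m)
    (hsq : ∀ i, f i ^ 2 = 1) :
    CoxGroup (I2 m) →* G :=
  PresentedGroup.toGroup (f := f) (by
    rintro r (⟨i, j, hij, -, rfl⟩ | ⟨i, rfl⟩)
    · rw [map_mul, map_inv, lift_altWord, lift_altWord, I2_off hij]
      fin_cases i <;> fin_cases j <;> simp_all
    · rw [map_pow, FreeGroup.lift_apply_of, hsq])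

@[simp] lemma mkHomW_of (f : Fin 2 → G)
    (hbr : altProd (f 0) (f 1) m = altProd (f 1) (f 0) m)
    (hsq : ∀ i, f i ^ 2 = 1) (i : Fin 2) :
    mkHomW f hbr hsq (sC (I2 m) i) = f i :=
  PresentedGroup.toGroup.of _

lemma homA_ext {φ ψ : ArtinGroup (I2 m) →* G}
    (h0 : φ (σA (I2 m) 0) = ψ (σA (I2 m) 0))
    (h1 : φ (σA (I2 m) 1) = ψ (σA (I2 m) 1)) : φ = ψ :=
  PresentedGroup.ext (fun i => by fin_cases i <;> assumption)

lemma braidA (hm : m ≠ 0) :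
    altProd (σA (I2 m) 0) (σA (I2 m) 1) m = altProd (σA (I2 m) 1) (σA (I2 m) 0) m := by
  have hmem : altWord (0 : Fin 2) 1 m * (altWord (1 : Fin 2) 0 m)⁻¹ ∈ artinRels (I2 m) := by
    exact ⟨0, 1, by decide, by rw [I2_off (by decide)]; exact hm,
      by rw [I2_off (by decide)]⟩
  have h1 : PresentedGroup.mk (artinRels (I2 m))
      (altWord (0 : Fin 2) 1 m * (altWord (1 : Fin 2) 0 m)⁻¹) = 1 :=
    (QuotientGroup.eq_one_iff _).mpr (Subgroup.subset_normalClosure hmem)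
  rw [map_mul, map_inv, ← liftA_eq_mk, lift_altWord, lift_altWord] at h1
  have := mul_inv_eq_one.mp h1
  simpa [σA] using this

lemma sq_sC (i : Fin 2) : (sC (I2 m) i) ^ 2 = 1 := by
  have hmem : (FreeGroup.of i) ^ 2 ∈ coxRels (I2 m) := Or.inr ⟨i, rfl⟩
  have h1 : PresentedGroup.mk (coxRels (I2 m)) ((FreeGroup.of i) ^ 2) = 1 :=
    (QuotientGroup.eq_one_iff _).mpr (Subgroup.subset_normalClosure hmem)
  rw [map_pow] at h1
  exact h1

end I2Basics
section WStruct

variable {m : ℕ}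

/-- the rotation in W -/
def ρW (m : ℕ) : CoxGroup (I2 m) := sC (I2 m) 0 * sC (I2 m) 1

lemma sC_inv (i : Fin 2) : (sC (I2 m) i)⁻¹ = sC (I2 m) i :=
  inv_eq_of_mul_eq_one_right (by rw [← sq]; exact sq_sC i)

lemma rhoW_inv : (ρW m)⁻¹ = sC (I2 m) 1 * sC (I2 m) 0 := by
  rw [ρW, mul_inv_rev, sC_inv, sC_inv]

lemma conj_rhoW : sC (I2 m) 0 * ρW m * (sC (I2 m) 0)⁻¹ = (ρW m)⁻¹ := by
  rw [rhoW_inv, ρW, sC_inv, ← mul_assoc, ← sq, sq_sC, one_mul]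

lemma conj_rhoW_zpow (j : ℤ) :
    sC (I2 m) 0 * (ρW m) ^ j * (sC (I2 m) 0)⁻¹ = (ρW m) ^ (-j) := by
  rw [← conj_zpow, conj_rhoW, inv_zpow, zpow_neg]

lemma swap_rhoW_zpow (j : ℤ) :
    sC (I2 m) 0 * (ρW m) ^ j = (ρW m) ^ (-j) * sC (I2 m) 0 := by
  rw [← conj_rhoW_zpow j]; group

/-- structure subgroup -/
def SW (m : ℕ) : Subgroup (CoxGroup (I2 m)) where
  carrier := {w | ∃ j : ℤ, w = (ρW m) ^ j ∨ w = (ρW m) ^ j * sC (I2 m) 0}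
  one_mem' := ⟨0, Or.inl (by simp)⟩
  mul_mem' := by
    rintro a b ⟨j, hj | hj⟩ ⟨k, hk | hk⟩ <;> subst hj hk
    · exact ⟨j + k, Or.inl (zpow_add _ _ _).symm⟩
    · exact ⟨j + k, Or.inr (by rw [← mul_assoc, ← zpow_add])⟩
    · refine ⟨j + -k, Or.inr ?_⟩
      rw [mul_assoc, swap_rhoW_zpow, ← mul_assoc, ← zpow_add]
    · refine ⟨j + -k, Or.inl ?_⟩
      have h1 : (ρW m) ^ j * sC (I2 m) 0 * ((ρW m) ^ k * sC (I2 m) 0)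
          = (ρW m) ^ j * (sC (I2 m) 0 * (ρW m) ^ k) * sC (I2 m) 0 := by
        group
      rw [h1, swap_rhoW_zpow, ← mul_assoc, ← zpow_add, mul_assoc, ← sq, sq_sC,
        mul_one]
  inv_mem' := by
    rintro a ⟨j, hj | hj⟩ <;> subst hj
    · exact ⟨-j, Or.inl (by rw [← zpow_neg])⟩
    · refine ⟨j, Or.inr ?_⟩
      rw [mul_inv_rev, sC_inv, ← zpow_neg, swap_rhoW_zpow, neg_neg]

lemma W_struct (w : CoxGroup (I2 m)) :
    ∃ j : ℤ, w = (ρW m) ^ j ∨ w = (ρW m) ^ j * sC (I2 m) 0 := by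
  refine PresentedGroup.generated_by _ (SW m) (fun i => ?_) w
  fin_cases i
  · exact ⟨0, Or.inr (by simp [sC])⟩
  · refine ⟨-1, Or.inr ?_⟩
    show sC (I2 m) 1 = _
    rw [zpow_neg, zpow_one, rhoW_inv, mul_assoc, ← sq, sq_sC, mul_one]

/-- the parity homomorphism on W -/
def τW (m : ℕ) : CoxGroup (I2 m) →* Multiplicative (ZMod 2) :=
  mkHomW (fun _ => Multiplicative.ofAdd (1 : ZMod 2)) rfl
    (fun _ => by show (Multiplicative.ofAdd (1 : ZMod 2)) ^ 2 = 1; decide)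

lemma τW_rho : τW m (ρW m) = 1 := by
  rw [ρW, map_mul]
  show Multiplicative.ofAdd (1 : ZMod 2) * Multiplicative.ofAdd (1 : ZMod 2) = 1
  decide

lemma sq_eq_one_of_odd {w : CoxGroup (I2 m)}
    (h : τW m w = Multiplicative.ofAdd (1 : ZMod 2)) : w ^ 2 = 1 := by
  obtain ⟨j, hw | hw⟩ := W_struct w
  · exfalso
    rw [hw, map_zpow, τW_rho, one_zpow] at h
    exact absurd h (by decide)
  · subst hw
    have : ((ρW m) ^ j * sC (I2 m) 0) ^ 2
        = (ρW m) ^ j * (sC (I2 m) 0 * (ρW m) ^ j) * sC (I2 m) 0 := by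
      rw [sq]; simp [mul_assoc]
    rw [this, swap_rhoW_zpow, ← mul_assoc, ← zpow_add, add_neg_cancel, zpow_zero,
      one_mul, ← sq, sq_sC]

end WStruct

section KernelChar

variable {m : ℕ}

/-- normal closure of the squares of the generators -/
def Ksub (m : ℕ) : Subgroup (ArtinGroup (I2 m)) :=
  Subgroup.normalClosure {σA (I2 m) 0 ^ 2, σA (I2 m) 1 ^ 2}

instance : (Ksub m).Normal := Subgroup.normalClosure_normal

lemma sq_mem_Ksub (i : Fin 2) : σA (I2 m) i ^ 2 ∈ Ksub m := by
  apply Subgroup.subset_normalClosure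
  fin_cases i
  · exact Set.mem_insert _ _
  · exact Set.mem_insert_of_mem _ rfl

lemma ker_stdEpi_eq (hm : m ≠ 0) : MonoidHom.ker (stdEpi (I2 m)) = Ksub m := by
  apply le_antisymm
  · -- ker ≤ K via β : W → A/K
    have hbr : altProd ((σA (I2 m) 0 : ArtinGroup (I2 m)) : ArtinGroup (I2 m) ⧸ Ksub m)
        ((σA (I2 m) 1 : ArtinGroup (I2 m)) : ArtinGroup (I2 m) ⧸ Ksub m) m
        = altProd ((σA (I2 m) 1 : ArtinGroup (I2 m)) : ArtinGroup (I2 m) ⧸ Ksub m)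
          ((σA (I2 m) 0 : ArtinGroup (I2 m)) : ArtinGroup (I2 m) ⧸ Ksub m) m := by
      have := congrArg (QuotientGroup.mk' (Ksub m)) (braidA hm)
      simpa [map_altProd] using this
    have hsq : ∀ i : Fin 2,
        ((σA (I2 m) i : ArtinGroup (I2 m)) : ArtinGroup (I2 m) ⧸ Ksub m) ^ 2 = 1 := by
      intro i
      rw [← QuotientGroup.mk_pow]
      exact (QuotientGroup.eq_one_iff _).mpr (sq_mem_Ksub i)
    set β := mkHomW (m := m)
      (fun i => ((σA (I2 m) i : ArtinGroup (I2 m)) : ArtinGroup (I2 m) ⧸ Ksub m))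
      hbr hsq with hβ
    have hcomp : β.comp (stdEpi (I2 m)) = QuotientGroup.mk' (Ksub m) := by
      apply homA_ext <;> simp [hβ]
    intro x hx
    have : QuotientGroup.mk' (Ksub m) x = 1 := by
      rw [← hcomp]
      simp only [MonoidHom.comp_apply]
      rw [MonoidHom.mem_ker.mp hx, map_one]
    exact (QuotientGroup.eq_one_iff _).mp this
  · apply Subgroup.normalClosure_le_normal
    rintro x (rfl | rfl) <;>
      simp [MonoidHom.mem_ker, map_pow, stdEpi_of, sq_sC]

end KernelChar
section AbelHoms

open Multiplicative

lemma altProd_comm {G : Type*} [Group G] (a b : G) (hab : a * b = b * a) (n : ℕ) :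
    altProd a b (2 * n) = altProd b a (2 * n) := by
  rw [altProd_two_mul, altProd_two_mul, hab]

/-- total-exponent parity homomorphism -/
def pτ (m : ℕ) : ArtinGroup (I2 m) →* Multiplicative (ZMod 2) :=
  mkHomA (fun _ => ofAdd (1 : ZMod 2)) rfl

lemma τ_μ (m : ℕ) : (τW m).comp (stdEpi (I2 m)) = pτ m := by
  apply homA_ext <;> simp [pτ, τW, mkHomW_of, stdEpi_of]

/-- total exponent homomorphism, for odd `m` -/
def pOdd (m : ℕ) : ArtinGroup (I2 m) →* Multiplicative ℤ :=
  mkHomA (fun _ => ofAdd (1 : ℤ)) rfl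

lemma hom_int_gens_eq {m k : ℕ} (hmk : m = 2 * k + 1)
    (h : ArtinGroup (I2 m) →* Multiplicative ℤ) :
    h (σA (I2 m) 0) = h (σA (I2 m) 1) := by
  subst hmk
  have hb := congrArg h (braidA (by omega))
  rw [map_altProd, map_altProd, altProd_odd, altProd_odd,
    mul_comm (h (σA (I2 (2 * k + 1)) 1))] at hb
  exact mul_left_cancel hb

lemma decompOdd {m : ℕ} (h : ArtinGroup (I2 m) →* Multiplicative ℤ)
    (hgen : h (σA (I2 m) 1) = h (σA (I2 m) 0)) (a : ArtinGroup (I2 m)) :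
    h a = h (σA (I2 m) 0) ^ (pOdd m a).toAdd := by
  have : h = (zpowersHom _ (h (σA (I2 m) 0))).comp (pOdd m) := by
    apply homA_ext <;>
      simp [pOdd, zpowersHom_apply, hgen]
  conv_lhs => rw [this]
  simp [zpowersHom_apply]

/-- first exponent homomorphism, for even `m` -/
def pE1 (n : ℕ) : ArtinGroup (I2 (2 * n)) →* Multiplicative ℤ :=
  mkHomA (fun i => if i = 0 then ofAdd (1 : ℤ) else 1)
    (altProd_comm _ _ (mul_comm _ _) n)

/-- second exponent homomorphism, for even `m` -/
def pE2 (n : ℕ) : ArtinGroup (I2 (2 * n)) →* Multiplicative ℤ :=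
  mkHomA (fun i => if i = 0 then 1 else ofAdd (1 : ℤ))
    (altProd_comm _ _ (mul_comm _ _) n)

lemma decompEven {n : ℕ} (h : ArtinGroup (I2 (2 * n)) →* Multiplicative ℤ)
    (a : ArtinGroup (I2 (2 * n))) :
    h a = h (σA (I2 (2 * n)) 0) ^ (pE1 n a).toAdd
        * h (σA (I2 (2 * n)) 1) ^ (pE2 n a).toAdd := by
  have : h = ((zpowersHom _ (h (σA (I2 (2 * n)) 0))).comp (pE1 n))
      * ((zpowersHom _ (h (σA (I2 (2 * n)) 1))).comp (pE2 n)) := by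
    apply homA_ext <;>
      simp [pE1, pE2, zpowersHom_apply]
  conv_lhs => rw [this]
  simp [zpowersHom_apply]

end AbelHoms
section Central

open Multiplicative

variable {n : ℕ}

lemma zA_comm (hn : n ≠ 0) (b : ArtinGroup (I2 (2 * n))) :
    (σA (I2 (2 * n)) 0 * σA (I2 (2 * n)) 1) ^ n * b
      = b * (σA (I2 (2 * n)) 0 * σA (I2 (2 * n)) 1) ^ n := by
  set s0 := σA (I2 (2 * n)) 0
  set s1 := σA (I2 (2 * n)) 1
  have hb : (s0 * s1) ^ n = (s1 * s0) ^ n := by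
    have := braidA (m := 2 * n) (by omega)
    rwa [altProd_two_mul, altProd_two_mul] at this
  have h0 : (s0 * s1) ^ n * s0 = s0 * (s0 * s1) ^ n := by
    have h := conj_pow_mul s0 s1 n
    rw [← hb] at h
    calc (s0 * s1) ^ n * s0 = s0 * (s0⁻¹ * (s0 * s1) ^ n * s0) := by group
      _ = s0 * (s0 * s1) ^ n := by rw [← h]
  have h1 : (s0 * s1) ^ n * s1 = s1 * (s0 * s1) ^ n := by
    have h := conj_pow_mul s1 s0 n
    rw [← hb] at h
    calc (s0 * s1) ^ n * s1 = s1 * (s1⁻¹ * (s0 * s1) ^ n * s1) := by group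
      _ = s1 * (s0 * s1) ^ n := by rw [← h]
  have : b ∈ Subgroup.centralizer {(s0 * s1) ^ n} := by
    refine PresentedGroup.generated_by _ _ (fun i => ?_) b
    rw [Subgroup.mem_centralizer_iff]
    rintro x rfl
    fin_cases i
    · exact h0
    · exact h1
  exact (Subgroup.mem_centralizer_iff.mp this) _ rfl

/-- conversion of additive automorphisms -/
def mulAutOfAddAut {M : Type*} [AddCommGroup M] (e : AddAut M) :
    MulAut (Multiplicative M) := AddEquiv.toMultiplicative e

lemma mulAutOfAddAut_apply {M : Type*} [AddCommGroup M] (e : AddAut M)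
    (u : Multiplicative M) :
    (mulAutOfAddAut e) u = Multiplicative.ofAdd (e u.toAdd) := rfl

lemma mulAutOfAddAut_inv_apply {M : Type*} [AddCommGroup M] (e : AddAut M)
    (u : M) :
    ((mulAutOfAddAut e)⁻¹) (Multiplicative.ofAdd u)
      = Multiplicative.ofAdd ((-e) u) := rfl

lemma mulAutOfAddAut_zpow_apply {M : Type*} [AddCommGroup M] (e : AddAut M)
    (j : ℤ) (u : M) :
    ((mulAutOfAddAut e) ^ j) (Multiplicative.ofAdd u)
      = Multiplicative.ofAdd ((j • e) u) := by
  induction j using Int.induction_on generalizing u with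
  | zero => rfl
  | succ k ih =>
      rw [zpow_add_one, add_one_zsmul, MulAut.mul_apply, AddAut.add_apply,
        mulAutOfAddAut_apply]
      exact ih (e u)
  | pred k ih =>
      rw [zpow_sub_one, sub_one_zsmul, MulAut.mul_apply, AddAut.add_apply,
        mulAutOfAddAut_inv_apply]
      exact ih ((-e) u)

/-- the main centralizer-based constraint -/
lemma central_exponent {N : Type*} [CommGroup N] (α : MulAut N) (w' : N)
    (hw : w' ^ n = 1) (a : ArtinGroup (I2 (2 * n)))
    (ha : ∀ b, a * b = b * a) :
    (α ^ ((pE1 n a).toAdd - (pE2 n a).toAdd)) w' = w' := by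
  classical
  set φ' : Multiplicative ℤ →* MulAut N := zpowersHom _ α with hφ'
  set x : N ⋊[φ'] Multiplicative ℤ := SemidirectProduct.inr (ofAdd 1) with hx
  set y : N ⋊[φ'] Multiplicative ℤ := x⁻¹ * SemidirectProduct.inl w' with hy
  have hxy : x * y = SemidirectProduct.inl w' := by rw [hy]; group
  have hxyn : (x * y) ^ n = 1 := by rw [hxy, ← map_pow, hw, map_one]
  have hbr : altProd x y (2 * n) = altProd y x (2 * n) := by
    rw [altProd_two_mul, altProd_two_mul, conj_pow_mul x y n, hxyn]
    group
  set f := mkHomA (m := 2 * n) (fun i => if i = 0 then x else y) hbr with hf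
  have hf0 : f (σA (I2 (2 * n)) 0) = x := by rw [hf]; simp
  have hf1 : f (σA (I2 (2 * n)) 1) = y := by rw [hf]; simp
  -- commutation with inl w'
  have hcomm : f a * SemidirectProduct.inl w' = SemidirectProduct.inl w' * f a := by
    have := congrArg f (ha (σA (I2 (2 * n)) 0 * σA (I2 (2 * n)) 1))
    simp only [map_mul] at this
    rw [hf0, hf1, hxy] at this
    exact this
  have hleft := congrArg SemidirectProduct.left hcomm
  simp only [SemidirectProduct.mul_left, SemidirectProduct.left_inl,
    SemidirectProduct.right_inl, SemidirectProduct.mul_right, map_one,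
    MulAut.one_apply] at hleft
  -- hleft : f a |>.left * φ' (f a).right w' = w' * (f a).left
  have hfix : φ' ((f a).right) w' = w' := by
    have := hleft
    rw [mul_comm (w' : N) ((f a).left)] at this
    exact mul_left_cancel this
  -- identify the right component with the exponent difference
  have hq : (f a).right = ofAdd ((pE1 n a).toAdd - (pE2 n a).toAdd) := by
    have hd := decompEven (SemidirectProduct.rightHom.comp f) a
    simp only [MonoidHom.comp_apply] at hd
    rw [hf0, hf1] at hd
    have hrx : SemidirectProduct.rightHom x = ofAdd (1 : ℤ) := by
      rw [hx]; simp
    have hry : SemidirectProduct.rightHom y = ofAdd (-1 : ℤ) := by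
      rw [hy, map_mul, map_inv, hx]; simp
    rw [hrx, hry] at hd
    show SemidirectProduct.rightHom (f a) = _
    rw [hd]
    rw [← ofAdd_zsmul, ← ofAdd_zsmul, ← ofAdd_add]
    congr 1
    simp only [smul_eq_mul, mul_one, mul_neg_one]
    ring
  rw [hq] at hfix
  rw [hφ'] at hfix
  rw [zpowersHom_apply] at hfix
  simpa using hfix

end Central
section Models

open Multiplicative

/-- the unipotent automorphism -/
def unip (n : ℕ) :
    AddAut (ZMod (2 * n) × ZMod (2 * n) × ZMod (2 * n)) where
  toFun u := (u.1, u.2.1 + u.1, u.2.2 + u.2.1)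
  invFun u := (u.1, u.2.1 - u.1, u.2.2 - u.2.1 + u.1)
  left_inv u := by simp [Prod.ext_iff]; try ring
  right_inv u := by simp [Prod.ext_iff]; try ring
  map_add' u v := by
    simp only [Prod.fst_add, Prod.snd_add, Prod.mk_add_mk, Prod.mk.injEq]
    refine ⟨trivial, by ring, by ring⟩

lemma unip_apply (n : ℕ) (v : ZMod (2 * n) × ZMod (2 * n) × ZMod (2 * n)) :
    unip n v = (v.1, v.2.1 + v.1, v.2.2 + v.2.1) := rfl

lemma unip_inv_apply (n : ℕ) (v : ZMod (2 * n) × ZMod (2 * n) × ZMod (2 * n)) :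
    (-unip n) v = (v.1, v.2.1 - v.1, v.2.2 - v.2.1 + v.1) := rfl

lemma unip_zpow (n : ℕ) (j : ℤ) :
    (j • (unip n)) ((2 : ZMod (2 * n)), (0 : ZMod (2 * n)), (0 : ZMod (2 * n)))
      = ((2 : ZMod (2 * n)), ((2 * j : ℤ) : ZMod (2 * n)),
          ((j * (j - 1) : ℤ) : ZMod (2 * n))) := by
  induction j using Int.induction_on with
  | zero => simp [Prod.ext_iff]
  | succ k ih =>
      have hsplit : (((k : ℤ) + 1) • (unip n)) = (unip n) + (k : ℤ) • (unip n) := by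
        rw [show (k : ℤ) + 1 = 1 + k by ring, add_zsmul, one_zsmul]
      rw [hsplit, AddAut.add_apply, ih, unip_apply]
      simp only [Prod.mk.injEq]
      refine ⟨trivial, ?_, ?_⟩ <;> push_cast <;> ring
  | pred k ih =>
      have hsplit : ((-(k : ℤ) - 1) • (unip n)) = -(unip n) + (-(k : ℤ)) • (unip n) := by
        rw [show -(k : ℤ) - 1 = -1 + -(k : ℤ) by ring, add_zsmul, neg_one_zsmul]
      rw [hsplit, AddAut.add_apply, ih, unip_inv_apply]
      simp only [Prod.mk.injEq]
      refine ⟨trivial, ?_, ?_⟩ <;> push_cast <;> ring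

lemma neg_sq_eq_one (M : Type*) [SubtractionCommMonoid M] :
    ((AddEquiv.neg M : AddAut M)) + (AddEquiv.neg M) = (0 : AddAut M) := by
  ext u
  show - - u = u
  simp

lemma central_diff_even {n : ℕ} (hn : 2 ≤ n) (a : ArtinGroup (I2 (2 * n)))
    (ha : ∀ b, a * b = b * a) {k : ℤ}
    (hk : ((pE1 n a).toAdd : ℤ) - (pE2 n a).toAdd = n * k) : 2 ∣ k := by
  rcases Nat.even_or_odd n with hpar | hpar
  · -- n even : use the unipotent model
    have hword : (ofAdd ((2 : ZMod (2 * n)), (0 : ZMod (2 * n)), (0 : ZMod (2 * n)))) ^ n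
        = 1 := by
      rw [← ofAdd_nsmul]
      have h0 : n • ((2 : ZMod (2 * n)), (0 : ZMod (2 * n)), (0 : ZMod (2 * n)))
          = (0 : ZMod (2 * n) × ZMod (2 * n) × ZMod (2 * n)) := by
        have h2 : n • (2 : ZMod (2 * n)) = ((2 * n : ℕ) : ZMod (2 * n)) := by
          push_cast
          rw [nsmul_eq_mul]
          ring
        simp [Prod.ext_iff, h2, ZMod.natCast_self]
      rw [h0]
      rfl
    have hcent := central_exponent (mulAutOfAddAut (unip n))
      (ofAdd ((2 : ZMod (2 * n)), (0 : ZMod (2 * n)), (0 : ZMod (2 * n)))) hword a ha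
    rw [mulAutOfAddAut_zpow_apply] at hcent
    have hfix := Multiplicative.ofAdd.injective hcent
    rw [unip_zpow] at hfix
    simp only [Prod.mk.injEq, true_and] at hfix
    obtain ⟨-, h3⟩ := hfix
    set j : ℤ := (pE1 n a).toAdd - (pE2 n a).toAdd with hj
    rw [ZMod.intCast_zmod_eq_zero_iff_dvd] at h3
    obtain ⟨d, hd⟩ := h3
    rw [hk] at hd
    have hnz : (n : ℤ) ≠ 0 := by positivity
    have hcancel : k * ((n : ℤ) * k - 1) = 2 * d := by
      apply mul_left_cancel₀ hnz
      push_cast at hd ⊢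
      linear_combination hd
    obtain ⟨t, ht⟩ := hpar
    have hodd : Odd ((n : ℤ) * k - 1) := by
      refine ⟨(t : ℤ) * k - 1, ?_⟩
      have hnt : (n : ℤ) = t + t := by exact_mod_cast ht
      rw [hnt]; ring
    have heven : Even (k * ((n : ℤ) * k - 1)) := ⟨d, by linarith⟩
    rcases Int.even_mul.mp heven with hc | hc
    · exact hc.two_dvd
    · exact absurd hc (Int.not_even_iff_odd.mpr hodd)
  · -- n odd : use the sign model
    have hn1 : n ≠ 1 := by omega
    obtain ⟨p, hp, hpn⟩ := Nat.exists_prime_and_dvd hn1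
    have hpodd : p ≠ 2 := by
      rintro rfl
      exact (Nat.not_even_iff_odd.mpr hpar) (even_iff_two_dvd.mpr hpn)
    have hp2 : 2 < p := lt_of_le_of_ne hp.two_le (Ne.symm hpodd)
    haveI : Fact (2 < p) := ⟨hp2⟩
    set e : AddAut (ZMod p) := AddEquiv.neg (ZMod p) with he
    have hword : (ofAdd (1 : ZMod p)) ^ n = 1 := by
      rw [← ofAdd_nsmul]
      have h1 : n • (1 : ZMod p) = ((n : ℕ) : ZMod p) := by
        rw [nsmul_eq_mul, mul_one]
      rw [h1, (ZMod.natCast_eq_zero_iff n p).mpr hpn]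
      rfl
    have hcent := central_exponent (mulAutOfAddAut e) (ofAdd (1 : ZMod p)) hword a ha
    rw [mulAutOfAddAut_zpow_apply] at hcent
    have hfix := Multiplicative.ofAdd.injective hcent
    set j : ℤ := (pE1 n a).toAdd - (pE2 n a).toAdd with hj
    have hjeven : Even j := by
      by_contra hodd
      obtain ⟨c, hc⟩ := Int.not_even_iff_odd.mp hodd
      have h2 : (2 : ℤ) • e = 0 := by
        rw [show (2 : ℤ) = 1 + 1 from rfl, add_zsmul, one_zsmul, neg_sq_eq_one]
      have hepow : j • e = e := by
        rw [hc, add_zsmul, mul_zsmul', h2, zsmul_zero, zero_add, one_zsmul]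
      rw [hepow] at hfix
      have hbad : (-1 : ZMod p) = 1 := hfix
      exact ZMod.neg_one_ne_one hbad
    obtain ⟨c, hc⟩ := hjeven
    rw [hk] at hc
    have hnodd : Odd (n : ℤ) := by exact_mod_cast hpar
    rcases Int.even_or_odd k with hke | hko
    · exact hke.two_dvd
    · exfalso
      have hoddnk : Odd ((n : ℤ) * k) := hnodd.mul hko
      rw [hc] at hoddnk
      exact (Int.not_odd_iff_even.mpr ⟨c, rfl⟩) hoddnk

end Models
section Main

open Multiplicative

/-- reduction mod 2 -/
def red2 : Multiplicative ℤ →* Multiplicative (ZMod 2) :=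
  AddMonoidHom.toMultiplicative (Int.castAddHom (ZMod 2))

lemma red2_apply (c : ℤ) : red2 (ofAdd c) = ofAdd ((c : ZMod 2)) := rfl

lemma key_sq_odd {m k : ℕ} (hmk : m = 2 * k + 1)
    (Φ : ArtinGroup (I2 m) ≃* ArtinGroup (I2 m)) (i : Fin 2) :
    (stdEpi (I2 m)) (Φ (σA (I2 m) i)) ^ 2 = 1 := by
  set h : ArtinGroup (I2 m) →* Multiplicative ℤ := (pOdd m).comp Φ.toMonoidHom with hh
  have hgen : h (σA (I2 m) 1) = h (σA (I2 m) 0) := (hom_int_gens_eq hmk h).symm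
  set c : ℤ := (h (σA (I2 m) 0)).toAdd with hc
  have hunit : IsUnit c := by
    set u := Φ.symm (σA (I2 m) 0) with hu
    have h1 : h u = ofAdd (1 : ℤ) := by
      rw [hh]
      simp only [MonoidHom.comp_apply, MulEquiv.coe_toMonoidHom, hu,
        MulEquiv.apply_symm_apply]
      simp [pOdd]
    have h2 := decompOdd h hgen u
    rw [h1] at h2
    have h3 := congrArg Multiplicative.toAdd h2
    rw [toAdd_ofAdd, toAdd_zpow, smul_eq_mul] at h3
    exact IsUnit.of_mul_eq_one (a := c) _ (by linarith [h3])
  have hτ : pτ m = red2.comp (pOdd m) := by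
    apply homA_ext <;> simp [pτ, pOdd, red2_apply]
  have hcast : ((c : ZMod 2)) = 1 := by
    rcases Int.isUnit_iff.mp hunit with h | h <;> rw [h] <;> decide
  have hpar : τW m ((stdEpi (I2 m)) (Φ (σA (I2 m) i))) = ofAdd (1 : ZMod 2) := by
    have hcomp := congrFun (congrArg DFunLike.coe (τ_μ m)) (Φ (σA (I2 m) i))
    simp only [MonoidHom.comp_apply] at hcomp
    rw [hcomp, hτ]
    simp only [MonoidHom.comp_apply]
    have hval : pOdd m (Φ (σA (I2 m) i)) = ofAdd c := by
      fin_cases i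
      · rw [hc]; simp [hh]
      · rw [hc, ← hgen]; simp [hh]
    rw [hval, red2_apply, hcast]
  exact sq_eq_one_of_odd hpar

lemma key_sq_even {n : ℕ} (hn : 2 ≤ n)
    (Φ : ArtinGroup (I2 (2 * n)) ≃* ArtinGroup (I2 (2 * n))) (i : Fin 2) :
    (stdEpi (I2 (2 * n))) (Φ (σA (I2 (2 * n)) i)) ^ 2 = 1 := by
  set h1 : ArtinGroup (I2 (2 * n)) →* Multiplicative ℤ := (pE1 n).comp Φ.toMonoidHom with hh1
  set h2 : ArtinGroup (I2 (2 * n)) →* Multiplicative ℤ := (pE2 n).comp Φ.toMonoidHom with hh2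
  set c11 : ℤ := (h1 (σA (I2 (2 * n)) 0)).toAdd with hc11
  set c12 : ℤ := (h1 (σA (I2 (2 * n)) 1)).toAdd with hc12
  set c21 : ℤ := (h2 (σA (I2 (2 * n)) 0)).toAdd with hc21
  set c22 : ℤ := (h2 (σA (I2 (2 * n)) 1)).toAdd with hc22
  set u := Φ.symm (σA (I2 (2 * n)) 0) with hu
  set v := Φ.symm (σA (I2 (2 * n)) 1) with hv
  have mkeq : ∀ (g : ArtinGroup (I2 (2 * n)) →* Multiplicative ℤ)
      (w : ArtinGroup (I2 (2 * n))) (t : ℤ), g w = ofAdd t →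
      (pE1 n w).toAdd * (g (σA (I2 (2 * n)) 0)).toAdd
        + (pE2 n w).toAdd * (g (σA (I2 (2 * n)) 1)).toAdd = t := by
    intro g w t hgw
    have hd := decompEven g w
    rw [hgw] at hd
    have h3 := congrArg Multiplicative.toAdd hd
    rw [toAdd_ofAdd] at h3
    simp only [toAdd_mul, toAdd_zpow, smul_eq_mul] at h3
    linarith [h3]
  have hΦu0 : h1 u = ofAdd (1 : ℤ) := by
    simp only [hh1, MonoidHom.comp_apply, MulEquiv.coe_toMonoidHom, hu,
      MulEquiv.apply_symm_apply]
    simp [pE1]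
  have hΦu1 : h2 u = ofAdd (0 : ℤ) := by
    simp only [hh2, MonoidHom.comp_apply, MulEquiv.coe_toMonoidHom, hu,
      MulEquiv.apply_symm_apply]
    simp [pE2]
  have hΦv0 : h1 v = ofAdd (0 : ℤ) := by
    simp only [hh1, MonoidHom.comp_apply, MulEquiv.coe_toMonoidHom, hv,
      MulEquiv.apply_symm_apply]
    simp [pE1]
  have hΦv1 : h2 v = ofAdd (1 : ℤ) := by
    simp only [hh2, MonoidHom.comp_apply, MulEquiv.coe_toMonoidHom, hv,
      MulEquiv.apply_symm_apply]
    simp [pE2]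
  have e1 := mkeq h1 u 1 hΦu0
  have e2 := mkeq h2 u 0 hΦu1
  have e3 := mkeq h1 v 0 hΦv0
  have e4 := mkeq h2 v 1 hΦv1
  rw [← hc11, ← hc12] at e1 e3
  rw [← hc21, ← hc22] at e2 e4
  set A : ℤ := (pE1 n u).toAdd
  set B : ℤ := (pE2 n u).toAdd
  set C : ℤ := (pE1 n v).toAdd
  set D : ℤ := (pE2 n v).toAdd
  have hdet : (c11 * c22 - c12 * c21) * (A * D - B * C) = 1 := by
    have hcalc : (A * c11 + B * c12) * (C * c21 + D * c22)
        - (A * c21 + B * c22) * (C * c11 + D * c12) = 1 := by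
      rw [e1, e2, e3, e4]; ring
    linear_combination hcalc
  -- centrality of the image of z
  set z := (σA (I2 (2 * n)) 0 * σA (I2 (2 * n)) 1) ^ n with hz
  have hacent : ∀ b, Φ z * b = b * Φ z := by
    intro b
    calc Φ z * b = Φ (z * Φ.symm b) := by
          rw [map_mul, MulEquiv.apply_symm_apply]
      _ = Φ (Φ.symm b * z) := by rw [hz, zA_comm (by omega)]
      _ = b * Φ z := by rw [map_mul, MulEquiv.apply_symm_apply]
  have hpE1z : (pE1 n (Φ z)).toAdd = n * (c11 + c12) := by
    rw [hz, map_pow, map_mul, map_pow, map_mul, toAdd_pow, toAdd_mul, nsmul_eq_mul]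
    rfl
  have hpE2z : (pE2 n (Φ z)).toAdd = n * (c21 + c22) := by
    rw [hz, map_pow, map_mul, map_pow, map_mul, toAdd_pow, toAdd_mul, nsmul_eq_mul]
    rfl
  have hdvd : 2 ∣ ((c11 + c12) - (c21 + c22)) := by
    apply central_diff_even hn (Φ z) hacent
      (k := (c11 + c12) - (c21 + c22))
    rw [hpE1z, hpE2z]
    ring
  -- pass to ZMod 2
  have hdet2 : ((c11 : ZMod 2) * c22 - (c12 : ZMod 2) * c21) = 1 := by
    have hprod : ((c11 * c22 - c12 * c21 : ℤ) : ZMod 2)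
        * ((A * D - B * C : ℤ) : ZMod 2) = 1 := by
      rw [← Int.cast_mul, hdet, Int.cast_one]
    have htwo : ∀ a b : ZMod 2, a * b = 1 → a = 1 := by decide
    have hres := htwo _ _ hprod
    push_cast at hres
    linear_combination hres
  have hrow : (c11 : ZMod 2) + c12 = (c21 : ZMod 2) + c22 := by
    obtain ⟨t, ht⟩ := hdvd
    have hcast := congrArg (fun s : ℤ => (s : ZMod 2)) ht
    push_cast at hcast
    have htwo : ((2 : ZMod 2)) = 0 := by decide
    rw [htwo] at hcast
    linear_combination hcast
  have hcols : ((c11 : ZMod 2) + c21 = 1) ∧ ((c12 : ZMod 2) + c22 = 1) := by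
    have key : ∀ a b c d : ZMod 2, a * d - b * c = 1 → a + b = c + d →
        (a + c = 1 ∧ b + d = 1) := by decide
    exact key _ _ _ _ (by linear_combination hdet2) hrow
  -- parity conclusion
  have hτ : pτ (2 * n) = (red2.comp (pE1 n)) * (red2.comp (pE2 n)) := by
    apply homA_ext <;> simp [pτ, pE1, pE2, red2_apply]
  have hpar : τW (2 * n) ((stdEpi (I2 (2 * n))) (Φ (σA (I2 (2 * n)) i)))
      = ofAdd (1 : ZMod 2) := by
    have hcomp := congrFun (congrArg DFunLike.coe (τ_μ (2 * n))) (Φ (σA (I2 (2 * n)) i))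
    simp only [MonoidHom.comp_apply] at hcomp
    rw [hcomp, hτ]
    have happ : (red2.comp (pE1 n) * red2.comp (pE2 n)) (Φ (σA (I2 (2 * n)) i))
        = red2 (h1 (σA (I2 (2 * n)) i)) * red2 (h2 (σA (I2 (2 * n)) i)) := rfl
    rw [happ]
    fin_cases i
    · show red2 (h1 (σA (I2 (2 * n)) 0)) * red2 (h2 (σA (I2 (2 * n)) 0)) = ofAdd 1
      rw [show h1 (σA (I2 (2 * n)) 0) = ofAdd c11 by rw [hc11, ofAdd_toAdd],
        show h2 (σA (I2 (2 * n)) 0) = ofAdd c21 by rw [hc21, ofAdd_toAdd],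
        red2_apply, red2_apply, ← ofAdd_add, hcols.1]
    · show red2 (h1 (σA (I2 (2 * n)) 1)) * red2 (h2 (σA (I2 (2 * n)) 1)) = ofAdd 1
      rw [show h1 (σA (I2 (2 * n)) 1) = ofAdd c12 by rw [hc12, ofAdd_toAdd],
        show h2 (σA (I2 (2 * n)) 1) = ofAdd c22 by rw [hc22, ofAdd_toAdd],
        red2_apply, red2_apply, ← ofAdd_add, hcols.2]
  exact sq_eq_one_of_odd hpar

lemma key_sq {m : ℕ} (hm : 3 ≤ m)
    (Φ : ArtinGroup (I2 m) ≃* ArtinGroup (I2 m)) (i : Fin 2) :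
    (stdEpi (I2 m)) (Φ (σA (I2 m) i)) ^ 2 = 1 := by
  rcases Nat.even_or_odd m with he | ho
  · obtain ⟨n, hn⟩ := he
    have hmn : m = 2 * n := by omega
    subst hmn
    exact key_sq_even (by omega) Φ i
  · obtain ⟨k, hk⟩ := ho
    exact key_sq_odd hk Φ i

lemma map_ker_le {m : ℕ} (hm : 3 ≤ m)
    (Φ : ArtinGroup (I2 m) ≃* ArtinGroup (I2 m)) :
    (MonoidHom.ker (stdEpi (I2 m))).map Φ.toMonoidHom ≤ MonoidHom.ker (stdEpi (I2 m)) := by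
  have hK : Ksub m ≤ MonoidHom.ker ((stdEpi (I2 m)).comp Φ.toMonoidHom) := by
    apply Subgroup.normalClosure_le_normal
    rintro x (rfl | rfl) <;>
    · show _ ∈ MonoidHom.ker ((stdEpi (I2 m)).comp Φ.toMonoidHom)
      rw [MonoidHom.mem_ker, MonoidHom.comp_apply, map_pow, map_pow]
      exact key_sq hm Φ _
  rintro y ⟨x, hx, rfl⟩
  rw [ker_stdEpi_eq (by omega)] at hx
  have hx2 := hK hx
  rw [MonoidHom.mem_ker, MonoidHom.comp_apply] at hx2
  exact MonoidHom.mem_ker.mpr hx2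

end Main
/-- For type `I₂(m)`, `m ≥ 3`, the colored Artin group `CA = ker μ` is a characteristic
subgroup of the Artin group `A`. -/
theorem stmt_5 (m : ℕ) (hm : 3 ≤ m)
    (Φ : ArtinGroup (I2 m) ≃* ArtinGroup (I2 m)) :
    (MonoidHom.ker (stdEpi (I2 m))).map Φ.toMonoidHom = MonoidHom.ker (stdEpi (I2 m)) := by
  apply le_antisymm (map_ker_le hm Φ)
  intro x hx
  have h2 : Φ.symm x ∈ MonoidHom.ker (stdEpi (I2 m)) :=
    map_ker_le hm Φ.symm ⟨x, hx, rfl⟩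
  exact ⟨Φ.symm x, h2, by simp⟩
end
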